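/- Fix 0 < r < 1 and a, b > 0. The function p ↦ M^p(a,b) = pa/(1−p) + rb/(p−r) is continuous and strictly convex on (r,1), decreasing on (r, p̄(a,b)] with range [γ(a,b), ∞), and increasing on [p̄(a,b), 1) with range [γ(a,b), ∞), where p̄(a,b) = (r(a+b) + (r+1)√(rab)) / (a + rb + 2√(rab)) and γ(a,b) = (r/(1−r))(a+b) + (2√r/(1−r))√(ab). -/

import Mathlib

noncomputable section

/-- The stationary shape function `M^p(a,b) = pa/(1−p) + rb/(p−r)`. -/
def Mfun (r p a b : ℝ) : ℝ := p * a / (1 - p) + r * b / (p - r)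

/-- The minimizing parameter `p̄(a,b)`. -/
def pbar (r a b : ℝ) : ℝ :=
  (r * (a + b) + (r + 1) * Real.sqrt (r * a * b)) /
    (a + r * b + 2 * Real.sqrt (r * a * b))

/-- The shape function `γ(a,b) = (r/(1−r))(a+b) + (2√r/(1−r))√(ab)`. -/
def gam (r a b : ℝ) : ℝ :=
  r / (1 - r) * (a + b) + 2 * Real.sqrt r / (1 - r) * Real.sqrt (a * b)

private lemma Mfun_hasDerivAt (r a b p : ℝ) (h1 : (1:ℝ) - p ≠ 0) (h2 : p - r ≠ 0) :
    HasDerivAt (fun q => Mfun r q a b) (a / (1 - p)^2 - r * b / (p - r)^2) p := by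
  have d1 : HasDerivAt (fun q : ℝ => q * a / (1 - q))
      (((1 * a + p * 0) * (1 - p) - p * a * (0 - 1)) / (1 - p)^2) p :=
    ((hasDerivAt_id p).mul (hasDerivAt_const p a)).div
      ((hasDerivAt_const p 1).sub (hasDerivAt_id p)) h1
  have d2 : HasDerivAt (fun q : ℝ => r * b / (q - r))
      ((0 * (p - r) - r * b * (1 - 0)) / (p - r)^2) p :=
    (hasDerivAt_const p (r * b)).div ((hasDerivAt_id p).sub (hasDerivAt_const p r)) h2
  have hadd := d1.add d2
  have heq : ((1 * a + p * 0) * (1 - p) - p * a * (0 - 1)) / (1 - p)^2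
      + (0 * (p - r) - r * b * (1 - 0)) / (p - r)^2
      = a / (1 - p)^2 - r * b / (p - r)^2 := by
    field_simp
    ring
  rw [heq] at hadd
  exact hadd

set_option maxHeartbeats 1000000 in
theorem stationary_shape_properties (r a b : ℝ) (hr0 : 0 < r) (hr1 : r < 1)
    (ha : 0 < a) (hb : 0 < b) :
    ContinuousOn (fun p => Mfun r p a b) (Set.Ioo r 1) ∧
    StrictConvexOn ℝ (Set.Ioo r 1) (fun p => Mfun r p a b) ∧
    StrictAntiOn (fun p => Mfun r p a b) (Set.Ioc r (pbar r a b)) ∧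
    (fun p => Mfun r p a b) '' Set.Ioc r (pbar r a b) = Set.Ici (gam r a b) ∧
    StrictMonoOn (fun p => Mfun r p a b) (Set.Ico (pbar r a b) 1) ∧
    (fun p => Mfun r p a b) '' Set.Ico (pbar r a b) 1 = Set.Ici (gam r a b) := by
  set f : ℝ → ℝ := fun p => Mfun r p a b with hf
  set s := Real.sqrt a with hsdef
  set t := Real.sqrt (r * b) with htdef
  have hs : 0 < s := Real.sqrt_pos.2 ha
  have ht : 0 < t := Real.sqrt_pos.2 (mul_pos hr0 hb)
  have hs2 : s ^ 2 = a := Real.sq_sqrt ha.le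
  have ht2 : t ^ 2 = r * b := Real.sq_sqrt (mul_pos hr0 hb).le
  have ha' : a = s ^ 2 := hs2.symm
  have hb' : b = t ^ 2 / r := by rw [eq_div_iff hr0.ne']; linarith [ht2]
  have hst : Real.sqrt (r * a * b) = s * t := by
    rw [show r * a * b = a * (r * b) by ring, Real.sqrt_mul ha.le]
  have hrab : Real.sqrt r * Real.sqrt (a * b) = s * t := by
    rw [← Real.sqrt_mul hr0.le, show r * (a * b) = a * (r * b) by ring,
      Real.sqrt_mul ha.le]
  have h1r : (0:ℝ) < 1 - r := by linarith
  -- pbar in terms of s, t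
  have hpbar : pbar r a b = (r * s + t) / (s + t) := by
    rw [pbar, hst, ha', hb']
    rw [div_eq_div_iff (by nlinarith) (by positivity)]
    field_simp
    ring
  have hpbar_gt : r < pbar r a b := by
    rw [hpbar, lt_div_iff₀ (by positivity)]
    nlinarith
  have hpbar_lt : pbar r a b < 1 := by
    rw [hpbar, div_lt_one (by positivity)]
    nlinarith
  -- gam in terms of s, t
  have hgam : gam r a b = (r * s ^ 2 + 2 * (s * t) + t ^ 2) / (1 - r) := by
    have e : gam r a b = (r * (a + b) + 2 * (Real.sqrt r * Real.sqrt (a * b))) / (1 - r) := by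
      rw [gam]; field_simp
    rw [e, hrab, ha', hb']
    field_simp
    ring
  have hgam_pos : 0 < gam r a b := by
    rw [hgam]
    positivity
  -- value at pbar
  have hval : f (pbar r a b) = gam r a b := by
    have e1 : 1 - pbar r a b = s * (1 - r) / (s + t) := by
      rw [hpbar]; field_simp; ring
    have e2 : pbar r a b - r = t * (1 - r) / (s + t) := by
      rw [hpbar]; field_simp; ring
    show Mfun r (pbar r a b) a b = gam r a b
    rw [Mfun, e1, e2, hpbar, hgam, ha', hb']
    field_simp
    ring
  -- derivative facts
  have hderiv : ∀ p ∈ Set.Ioo r 1,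
      HasDerivAt f (a / (1 - p)^2 - r * b / (p - r)^2) p := fun p hp =>
    Mfun_hasDerivAt r a b p (ne_of_gt (by linarith [hp.2] : (0:ℝ) < 1 - p))
      (ne_of_gt (by linarith [hp.1] : (0:ℝ) < p - r))
  have hderiv' : ∀ p ∈ Set.Ioo r 1,
      deriv f p = a / (1 - p)^2 - r * b / (p - r)^2 := fun p hp =>
    (hderiv p hp).deriv
  -- continuity
  have hcont : ContinuousOn f (Set.Ioo r 1) := fun p hp =>
    (hderiv p hp).differentiableAt.continuousAt.continuousWithinAt
  -- lower bound: f p > r*b/(p-r) and f p > p*a/(1-p) on (r,1)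
  have hlb1 : ∀ p ∈ Set.Ioo r 1, r * b / (p - r) < f p := by
    intro p hp
    have h1 : 0 < 1 - p := by linarith [hp.2]
    have h2 : 0 < p := lt_trans hr0 hp.1
    have : 0 < p * a / (1 - p) := by positivity
    show r * b / (p - r) < p * a / (1 - p) + r * b / (p - r)
    linarith
  have hlb2 : ∀ p ∈ Set.Ioo r 1, p * a / (1 - p) < f p := by
    intro p hp
    have h2 : 0 < p - r := by linarith [hp.1]
    have : 0 < r * b / (p - r) := by positivity
    show p * a / (1 - p) < p * a / (1 - p) + r * b / (p - r)
    linarith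
  -- sign of derivative
  have hneg : ∀ p ∈ Set.Ioo r (pbar r a b), deriv f p < 0 := by
    intro p hp
    have hp' : p ∈ Set.Ioo r 1 := ⟨hp.1, lt_trans hp.2 hpbar_lt⟩
    have h1 : 0 < 1 - p := by linarith [hp'.2]
    have h2 : 0 < p - r := by linarith [hp.1]
    rw [hderiv' p hp', sub_neg]
    rw [div_lt_div_iff₀ (by positivity) (by positivity)]
    -- a * (p-r)^2 < r*b * (1-p)^2
    have key : s * (p - r) < t * (1 - p) := by
      have := hp.2
      rw [hpbar, lt_div_iff₀ (by positivity)] at this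
      linarith [this]
    have hsum : 0 < t * (1 - p) + s * (p - r) := by positivity
    rw [ha', ← ht2]
    nlinarith [mul_pos (sub_pos.2 key) hsum]
  have hpos : ∀ p ∈ Set.Ioo (pbar r a b) 1, 0 < deriv f p := by
    intro p hp
    have hp' : p ∈ Set.Ioo r 1 := ⟨lt_trans hpbar_gt hp.1, hp.2⟩
    have h1 : 0 < 1 - p := by linarith [hp.2]
    have h2 : 0 < p - r := by linarith [hp'.1]
    rw [hderiv' p hp', sub_pos]
    rw [div_lt_div_iff₀ (by positivity) (by positivity)]
    -- r*b * (1-p)^2 < a * (p-r)^2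
    have key : t * (1 - p) < s * (p - r) := by
      have := hp.1
      rw [hpbar, div_lt_iff₀ (by positivity)] at this
      linarith [this]
    have hsum : 0 < s * (p - r) + t * (1 - p) := by positivity
    rw [ha', ← ht2]
    nlinarith [mul_pos (sub_pos.2 key) hsum]
  -- strict antitone on Ioc r pbar
  have hIoc_sub : Set.Ioc r (pbar r a b) ⊆ Set.Ioo r 1 := fun x hx =>
    ⟨hx.1, lt_of_le_of_lt hx.2 hpbar_lt⟩
  have hIco_sub : Set.Ico (pbar r a b) 1 ⊆ Set.Ioo r 1 := fun x hx =>
    ⟨lt_of_lt_of_le hpbar_gt hx.1, hx.2⟩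
  have hanti : StrictAntiOn f (Set.Ioc r (pbar r a b)) := by
    apply strictAntiOn_of_deriv_neg (convex_Ioc _ _) (hcont.mono hIoc_sub)
    intro x hx
    rw [interior_Ioc] at hx
    exact hneg x hx
  have hmono : StrictMonoOn f (Set.Ico (pbar r a b) 1) := by
    apply strictMonoOn_of_deriv_pos (convex_Ico _ _) (hcont.mono hIco_sub)
    intro x hx
    rw [interior_Ico] at hx
    exact hpos x hx
  -- strict convexity
  have hconv : StrictConvexOn ℝ (Set.Ioo r 1) f := by
    apply StrictMonoOn.strictConvexOn_of_deriv (convex_Ioo _ _) hcont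
    rw [interior_Ioo]
    intro p hp q hq hpq
    rw [hderiv' p hp, hderiv' q hq]
    have h1p : 0 < 1 - p := by linarith [hp.2]
    have h1q : 0 < 1 - q := by linarith [hq.2]
    have h2p : 0 < p - r := by linarith [hp.1]
    have h2q : 0 < q - r := by linarith [hq.1]
    have e1 : a / (1 - p)^2 < a / (1 - q)^2 := by
      exact div_lt_div_of_pos_left ha (by positivity)
        (pow_lt_pow_left₀ (by linarith) (by linarith) (by norm_num))
    have e2 : r * b / (q - r)^2 < r * b / (p - r)^2 := by
      exact div_lt_div_of_pos_left (mul_pos hr0 hb) (by positivity)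
        (pow_lt_pow_left₀ (by linarith) (by linarith) (by norm_num))
    linarith
  -- images
  have himg1 : f '' Set.Ioc r (pbar r a b) = Set.Ici (gam r a b) := by
    apply Set.Subset.antisymm
    · rintro _ ⟨p, hp, rfl⟩
      rcases eq_or_lt_of_le hp.2 with h | h
      · rw [h, hval]; exact Set.self_mem_Ici
      · have := hanti hp (Set.right_mem_Ioc.2 hpbar_gt) h
        rw [hval] at this
        exact le_of_lt this
    · intro y hy
      rcases eq_or_lt_of_le (show gam r a b ≤ y from hy) with h | h
      · exact ⟨pbar r a b, Set.right_mem_Ioc.2 hpbar_gt, h ▸ hval⟩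
      · have hy0 : 0 < y := lt_trans hgam_pos h
        set d := min ((pbar r a b - r) / 2) (r * b / y) with hd
        have hd0 : 0 < d := lt_min (by linarith) (by positivity)
        set p0 := r + d with hp0def
        have hp0r : r < p0 := by simp [hp0def]; linarith
        have hp0lt : p0 < pbar r a b := by
          have : d ≤ (pbar r a b - r) / 2 := min_le_left _ _
          simp only [hp0def]
          linarith
        have hp0mem : p0 ∈ Set.Ioo r 1 := ⟨hp0r, lt_trans hp0lt hpbar_lt⟩
        have hfp0 : y ≤ f p0 := by
          have h1 : d ≤ r * b / y := min_le_right _ _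
          have h2 : y ≤ r * b / d := by
            rw [le_div_iff₀ hd0]
            rw [le_div_iff₀ hy0] at h1
            nlinarith
          have h3 : r * b / (p0 - r) = r * b / d := by
            simp [hp0def]
          have := hlb1 p0 hp0mem
          rw [h3] at this
          linarith
        have hsub : Set.Icc p0 (pbar r a b) ⊆ Set.Ioo r 1 := fun x hx =>
          ⟨lt_of_lt_of_le hp0r hx.1, lt_of_le_of_lt hx.2 hpbar_lt⟩
        have := intermediate_value_Icc' (le_of_lt hp0lt) (hcont.mono hsub)
        have hymem : y ∈ Set.Icc (f (pbar r a b)) (f p0) := ⟨hval ▸ hy, hfp0⟩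
        obtain ⟨p, hpIcc, hfp⟩ := this hymem
        exact ⟨p, ⟨lt_of_lt_of_le hp0r hpIcc.1, hpIcc.2⟩, hfp⟩
  have himg2 : f '' Set.Ico (pbar r a b) 1 = Set.Ici (gam r a b) := by
    apply Set.Subset.antisymm
    · rintro _ ⟨p, hp, rfl⟩
      rcases eq_or_lt_of_le hp.1 with h | h
      · rw [← h, hval]; exact Set.self_mem_Ici
      · have := hmono (Set.left_mem_Ico.2 hpbar_lt) hp h
        rw [hval] at this
        exact le_of_lt this
    · intro y hy
      rcases eq_or_lt_of_le (show gam r a b ≤ y from hy) with h | h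
      · exact ⟨pbar r a b, Set.left_mem_Ico.2 hpbar_lt, h ▸ hval⟩
      · have hy0 : 0 < y := lt_trans hgam_pos h
        have hpb0 : 0 < pbar r a b := lt_trans hr0 hpbar_gt
        set e := min ((1 - pbar r a b) / 2) (pbar r a b * a / y) with he
        have he0 : 0 < e := lt_min (by linarith) (by positivity)
        set p1 := 1 - e with hp1def
        have hp1lt : p1 < 1 := by simp [hp1def]; linarith
        have hp1gt : pbar r a b < p1 := by
          have : e ≤ (1 - pbar r a b) / 2 := min_le_left _ _
          simp only [hp1def]
          linarith
        have hp1mem : p1 ∈ Set.Ioo r 1 := ⟨lt_trans hpbar_gt hp1gt, hp1lt⟩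
        have hfp1 : y ≤ f p1 := by
          have h1 : e ≤ pbar r a b * a / y := min_le_right _ _
          have h2 : y ≤ pbar r a b * a / e := by
            rw [le_div_iff₀ he0]
            rw [le_div_iff₀ hy0] at h1
            nlinarith
          have h4 : pbar r a b * a / e ≤ p1 * a / e := by
            gcongr

          have h3 : p1 * a / (1 - p1) = p1 * a / e := by
            simp [hp1def]
          have := hlb2 p1 hp1mem
          rw [h3] at this
          linarith
        have hsub : Set.Icc (pbar r a b) p1 ⊆ Set.Ioo r 1 := fun x hx =>
          ⟨lt_of_lt_of_le hpbar_gt hx.1, lt_of_le_of_lt hx.2 hp1lt⟩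
        have := intermediate_value_Icc (le_of_lt hp1gt) (hcont.mono hsub)
        have hymem : y ∈ Set.Icc (f (pbar r a b)) (f p1) := ⟨hval ▸ hy, hfp1⟩
        obtain ⟨p, hpIcc, hfp⟩ := this hymem
        exact ⟨p, ⟨hpIcc.1, lt_of_le_of_lt hpIcc.2 hp1lt⟩, hfp⟩
  exact ⟨hcont, hconv, hanti, himg1, hmono, himg2⟩

end
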